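/- Let r₁ : C₁ → B, r₂ : C₂ → B be surjective chain maps of finite-dimensional Hilbert cochain complexes which are partial isometries (r_j r_j* = id), and let β_θ : C₁ ⊕_θ C₂ → C₂, β_θ(ξ₁,ξ₂) = ξ₂, for 0 < θ < π/2. Then det(β_θ β_θ* : C₂^j → C₂^j) = (1 + tan²θ)^{−dim B^j} for every j. -/

import Mathlib

noncomputable section

section

variable (C₁ C₂ B : ℕ → Type)
  [∀ j, NormedAddCommGroup (C₁ j)] [∀ j, InnerProductSpace ℂ (C₁ j)]
  [∀ j, FiniteDimensional ℂ (C₁ j)]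
  [∀ j, NormedAddCommGroup (C₂ j)] [∀ j, InnerProductSpace ℂ (C₂ j)]
  [∀ j, FiniteDimensional ℂ (C₂ j)]
  [∀ j, NormedAddCommGroup (B j)] [∀ j, InnerProductSpace ℂ (B j)]
  [∀ j, FiniteDimensional ℂ (B j)]

/-- The orthogonal direct sum `C₁ ⊕ C₂` in degree `j`. -/
abbrev SumC (j : ℕ) : Type := WithLp 2 (C₁ j × C₂ j)

variable (d₁ : ∀ j, C₁ j →ₗ[ℂ] C₁ (j + 1)) (d₂ : ∀ j, C₂ j →ₗ[ℂ] C₂ (j + 1))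
variable (r₁ : ∀ j, C₁ j →ₗ[ℂ] B j) (r₂ : ∀ j, C₂ j →ₗ[ℂ] B j) (θ : ℝ)

/-- The differential `d¹ ⊕ d²`. -/
def sumD (j : ℕ) : SumC C₁ C₂ j →ₗ[ℂ] SumC C₁ C₂ (j + 1) :=
  (WithLp.linearEquiv 2 ℂ (C₁ (j + 1) × C₂ (j + 1))).symm.toLinearMap ∘ₗ
    LinearMap.prodMap (d₁ j) (d₂ j) ∘ₗ
    (WithLp.linearEquiv 2 ℂ (C₁ j × C₂ j)).toLinearMap

/-- The constraint map whose kernel is `(C₁ ⊕_θ C₂)^j`,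
`(ξ₁, ξ₂) ↦ cos θ · r₁ ξ₁ - sin θ · r₂ ξ₂`. -/
def constraintMap (j : ℕ) : SumC C₁ C₂ j →ₗ[ℂ] B j :=
  ((Real.cos θ : ℂ) • (r₁ j ∘ₗ LinearMap.fst ℂ (C₁ j) (C₂ j))
      - (Real.sin θ : ℂ) • (r₂ j ∘ₗ LinearMap.snd ℂ (C₁ j) (C₂ j))) ∘ₗ
    (WithLp.linearEquiv 2 ℂ (C₁ j × C₂ j)).toLinearMap

/-- `(C₁ ⊕_θ C₂)^j = {(ξ₁,ξ₂) : cos θ · r₁ ξ₁ = sin θ · r₂ ξ₂}`. -/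
def Dtheta (j : ℕ) : Submodule ℂ (SumC C₁ C₂ j) :=
  LinearMap.ker (constraintMap C₁ C₂ B r₁ r₂ θ j)

/-- `α_θ : ker r₁ → C₁ ⊕_θ C₂`, `ξ ↦ (ξ, 0)`. -/
def alphaTheta (j : ℕ) : ↥(LinearMap.ker (r₁ j)) →ₗ[ℂ] ↥(Dtheta C₁ C₂ B r₁ r₂ θ j) :=
  LinearMap.codRestrict (Dtheta C₁ C₂ B r₁ r₂ θ j)
    ((WithLp.linearEquiv 2 ℂ (C₁ j × C₂ j)).symm.toLinearMap ∘ₗ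
      LinearMap.inl ℂ (C₁ j) (C₂ j) ∘ₗ (LinearMap.ker (r₁ j)).subtype)
    (fun x => by
      have hx : r₁ j x.1 = 0 := x.2
      simp [Dtheta, constraintMap, LinearMap.mem_ker, hx])

/-- `β_θ : C₁ ⊕_θ C₂ → C₂`, `(ξ₁, ξ₂) ↦ ξ₂`. -/
def betaTheta (j : ℕ) : ↥(Dtheta C₁ C₂ B r₁ r₂ θ j) →ₗ[ℂ] C₂ j :=
  (LinearMap.snd ℂ (C₁ j) (C₂ j) ∘ₗ (WithLp.linearEquiv 2 ℂ (C₁ j × C₂ j)).toLinearMap) ∘ₗ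
    (Dtheta C₁ C₂ B r₁ r₂ θ j).subtype

end


section Aux

lemma det_prodMap' {K : Type*} [Field K] {M N : Type*} [AddCommGroup M] [Module K M]
    [AddCommGroup N] [Module K N] [FiniteDimensional K M] [FiniteDimensional K N]
    (f : M →ₗ[K] M) (g : N →ₗ[K] N) :
    LinearMap.det (f.prodMap g) = LinearMap.det f * LinearMap.det g := by
  classical
  let b₁ := Module.finBasis K M
  let b₂ := Module.finBasis K N
  rw [← LinearMap.det_toMatrix (b₁.prod b₂), LinearMap.toMatrix_prodMap,
    Matrix.det_fromBlocks_zero₂₁, LinearMap.det_toMatrix, LinearMap.det_toMatrix]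

lemma det_one_sub_smul_idem {V : Type*} [AddCommGroup V] [Module ℂ V] [FiniteDimensional ℂ V]
    (Q : V →ₗ[ℂ] V) (hQ : Q ∘ₗ Q = Q) (c : ℂ) :
    LinearMap.det (LinearMap.id - c • Q) = (1 - c) ^ (Module.finrank ℂ (LinearMap.range Q)) := by
  classical
  set p := LinearMap.range Q with hp
  have hidem : ∀ y, Q (Q y) = Q y := fun y => by
    simpa using LinearMap.congr_fun hQ y
  have hcod : ∀ x : p, Q.codRestrict p (fun x => LinearMap.mem_range_self Q x) ↑x = x := by
    rintro ⟨x, y, rfl⟩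
    ext
    simpa using hidem y
  have hc : IsCompl p (LinearMap.ker (Q.codRestrict p (fun x => LinearMap.mem_range_self Q x))) :=
    LinearMap.isCompl_of_proj hcod
  have hker : LinearMap.ker (Q.codRestrict p (fun x => LinearMap.mem_range_self Q x)) =
      LinearMap.ker Q := LinearMap.ker_codRestrict _ _ _
  rw [hker] at hc
  let e := Submodule.prodEquivOfIsCompl p (LinearMap.ker Q) hc
  have key0 : ((LinearMap.id : V →ₗ[ℂ] V) - c • Q) ∘ₗ (e : ↥p × ↥(LinearMap.ker Q) →ₗ[ℂ] V) =
      (e : ↥p × ↥(LinearMap.ker Q) →ₗ[ℂ] V) ∘ₗ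
        (((1 - c) • (LinearMap.id : p →ₗ[ℂ] p)).prodMap (LinearMap.id : LinearMap.ker Q →ₗ[ℂ] _)) := by
    apply LinearMap.ext
    rintro ⟨a, b⟩
    have ha : Q ↑a = ↑a := by
      obtain ⟨a, y, rfl⟩ := a
      simpa using hidem y
    have hb : Q ↑b = 0 := b.2
    simp only [LinearMap.comp_apply, LinearMap.coe_coe, LinearMap.sub_apply, LinearMap.id_apply,
      LinearMap.smul_apply, Submodule.coe_prodEquivOfIsCompl', LinearMap.prodMap_apply, map_add,
      ha, hb, Submodule.coe_smul, sub_smul, one_smul, smul_add, smul_zero, add_zero, e]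
    simp only [LinearEquiv.coe_coe, Submodule.coe_prodEquivOfIsCompl', map_add, ha, hb,
      Submodule.coe_smul, sub_smul, one_smul, smul_add, smul_zero, add_zero]
    push_cast
    abel
  have key : (LinearMap.id : V →ₗ[ℂ] V) - c • Q =
      ↑e ∘ₗ (((1 - c) • (LinearMap.id : p →ₗ[ℂ] p)).prodMap (LinearMap.id : LinearMap.ker Q →ₗ[ℂ] _)) ∘ₗ ↑e.symm := by
    apply LinearMap.ext
    intro x
    have := LinearMap.congr_fun key0 (e.symm x)
    simpa [LinearMap.comp_apply] using this
  rw [key, LinearMap.det_conj, det_prodMap', LinearMap.det_id, mul_one,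
    LinearMap.det_smul, LinearMap.det_id, mul_one]

end Aux

/-- if `r₁, r₂` are surjective chain maps and partial isometries
(`r_j r_j* = id`) and `0 < θ < π/2`, then for `β_θ : C₁ ⊕_θ C₂ → C₂`, `(ξ₁,ξ₂) ↦ ξ₂`:
`det(β_θ β_θ* : C₂^j → C₂^j) = (1 + tan²θ)^{-dim B^j}`. -/
theorem det_betaTheta_betaTheta_adjoint
    (C₁ C₂ B : ℕ → Type)
    [∀ j, NormedAddCommGroup (C₁ j)] [∀ j, InnerProductSpace ℂ (C₁ j)]
    [∀ j, FiniteDimensional ℂ (C₁ j)]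
    [∀ j, NormedAddCommGroup (C₂ j)] [∀ j, InnerProductSpace ℂ (C₂ j)]
    [∀ j, FiniteDimensional ℂ (C₂ j)]
    [∀ j, NormedAddCommGroup (B j)] [∀ j, InnerProductSpace ℂ (B j)]
    [∀ j, FiniteDimensional ℂ (B j)]
    (d₁ : ∀ j, C₁ j →ₗ[ℂ] C₁ (j + 1)) (d₂ : ∀ j, C₂ j →ₗ[ℂ] C₂ (j + 1))
    (dB : ∀ j, B j →ₗ[ℂ] B (j + 1))
    (hd₁ : ∀ j, d₁ (j + 1) ∘ₗ d₁ j = 0) (hd₂ : ∀ j, d₂ (j + 1) ∘ₗ d₂ j = 0)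
    (hdB : ∀ j, dB (j + 1) ∘ₗ dB j = 0)
    (r₁ : ∀ j, C₁ j →ₗ[ℂ] B j) (r₂ : ∀ j, C₂ j →ₗ[ℂ] B j)
    (hr₁ : ∀ j, Function.Surjective (r₁ j)) (hr₂ : ∀ j, Function.Surjective (r₂ j))
    (hchain₁ : ∀ j, dB j ∘ₗ r₁ j = r₁ (j + 1) ∘ₗ d₁ j)
    (hchain₂ : ∀ j, dB j ∘ₗ r₂ j = r₂ (j + 1) ∘ₗ d₂ j)
    (hpi₁ : ∀ j, r₁ j ∘ₗ LinearMap.adjoint (r₁ j) = LinearMap.id)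
    (hpi₂ : ∀ j, r₂ j ∘ₗ LinearMap.adjoint (r₂ j) = LinearMap.id)
    (θ : ℝ) (hθ : 0 < θ) (hθ2 : θ < Real.pi / 2) (j : ℕ) :
    LinearMap.det
        (betaTheta C₁ C₂ B r₁ r₂ θ j ∘ₗ LinearMap.adjoint (betaTheta C₁ C₂ B r₁ r₂ θ j))
      = ((1 + Real.tan θ ^ 2 : ℝ) : ℂ) ^ (-(Module.finrank ℂ (B j) : ℤ)) := by
  classical
  set s : ℂ := (Real.sin θ : ℂ) with hs
  set co : ℂ := (Real.cos θ : ℂ) with hco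
  have trig : co ^ 2 = 1 - s ^ 2 := by
    rw [hs, hco]
    norm_cast
    exact Real.cos_sq' θ
  let R₁ := LinearMap.adjoint (r₁ j)
  let R₂ := LinearMap.adjoint (r₂ j)
  have h1 : ∀ b, r₁ j (R₁ b) = b := fun b => by
    simpa using LinearMap.congr_fun (hpi₁ j) b
  have h2 : ∀ b, r₂ j (R₂ b) = b := fun b => by
    simpa using LinearMap.congr_fun (hpi₂ j) b
  set Q : C₂ j →ₗ[ℂ] C₂ j := R₂ ∘ₗ r₂ j with hQdef
  let eq2 := WithLp.linearEquiv 2 ℂ (C₁ j × C₂ j)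
  set gfun : C₂ j →ₗ[ℂ] SumC C₁ C₂ j :=
    eq2.symm.toLinearMap ∘ₗ
      LinearMap.prod ((s * co) • (R₁ ∘ₗ r₂ j)) (LinearMap.id - s ^ 2 • Q) with hgfun
  have hmem : ∀ η, gfun η ∈ Dtheta C₁ C₂ B r₁ r₂ θ j := by
    intro η
    simp only [Dtheta, LinearMap.mem_ker, constraintMap, hgfun, LinearMap.comp_apply,
      LinearEquiv.coe_toLinearMap, WithLp.linearEquiv_apply, WithLp.linearEquiv_symm_apply,
      Equiv.apply_symm_apply, LinearMap.sub_apply, LinearMap.smul_apply, LinearMap.prod_apply,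
      Function.prod, LinearMap.fst_apply, LinearMap.snd_apply, LinearMap.id_apply, map_smul, map_sub,
      h1, h2, hQdef, eq2, AddEquiv.toFun_eq_coe, AddEquiv.invFun_eq_symm, WithLp.coe_addEquiv, WithLp.coe_symm_addEquiv, WithLp.ofLp_toLp, WithLp.coe_linearEquiv, WithLp.coe_symm_linearEquiv, WithLp.toLp_fst, WithLp.toLp_snd]
    rw [sub_eq_zero]
    have trig2 : Complex.cos ↑θ ^ 2 = 1 - Complex.sin ↑θ ^ 2 := by
      linear_combination Complex.sin_sq_add_cos_sq (θ : ℂ)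
    simp only [hs, hco, Complex.ofReal_sin, Complex.ofReal_cos]
    match_scalars
    linear_combination Complex.sin ↑θ * trig2
  set g : C₂ j →ₗ[ℂ] ↥(Dtheta C₁ C₂ B r₁ r₂ θ j) :=
    LinearMap.codRestrict _ gfun hmem with hg
  have hadj : LinearMap.adjoint (betaTheta C₁ C₂ B r₁ r₂ θ j) = g := by
    refine ((LinearMap.eq_adjoint_iff g (betaTheta C₁ C₂ B r₁ r₂ θ j)).mpr ?_).symm
    intro η x
    obtain ⟨x, hx⟩ := x
    have hx' : co • r₁ j x.fst = s • r₂ j x.snd := by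
      have := hx
      simp only [Dtheta, LinearMap.mem_ker, constraintMap, LinearMap.comp_apply,
        LinearEquiv.coe_toLinearMap, WithLp.linearEquiv_apply, LinearMap.sub_apply,
        LinearMap.smul_apply, LinearMap.fst_apply, LinearMap.snd_apply] at this
      rw [sub_eq_zero] at this
      exact this
    simp only [hg, LinearMap.codRestrict_apply, betaTheta, LinearMap.comp_apply,
      Submodule.coe_inner, Submodule.coe_subtype, LinearEquiv.coe_toLinearMap,
      WithLp.linearEquiv_apply, LinearMap.snd_apply, AddEquiv.toFun_eq_coe, AddEquiv.invFun_eq_symm, WithLp.coe_addEquiv, WithLp.coe_symm_addEquiv, WithLp.ofLp_toLp, WithLp.ofLp_snd]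
    rw [WithLp.prod_inner_apply]
    simp only [hgfun, LinearMap.comp_apply, LinearEquiv.coe_toLinearMap,
      WithLp.coe_linearEquiv, WithLp.coe_symm_linearEquiv, WithLp.toLp_fst, WithLp.toLp_snd,
      LinearMap.prod_apply, Function.prod, LinearMap.sub_apply, LinearMap.smul_apply,
      LinearMap.id_apply, hQdef, eq2, WithLp.ofLp_fst, WithLp.ofLp_snd]
    simp only [inner_smul_left, inner_sub_left, R₁, R₂, LinearMap.adjoint_inner_left]
    have key : (starRingEnd ℂ) (s * co) * inner ℂ (r₂ j η) (r₁ j x.fst)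
        = (starRingEnd ℂ) (s ^ 2) * inner ℂ (r₂ j η) (r₂ j x.snd) := by
      have e1 : inner (𝕜 := ℂ) (r₂ j η) (co • r₁ j x.fst) = inner (𝕜 := ℂ) (r₂ j η) (s • r₂ j x.snd) := by
        rw [hx']
      rw [inner_smul_right, inner_smul_right] at e1
      have hsconj : (starRingEnd ℂ) s = s := Complex.conj_ofReal _
      have hcconj : (starRingEnd ℂ) co = co := Complex.conj_ofReal _
      rw [map_mul, map_pow, hsconj, hcconj]
      calc s * co * inner ℂ (r₂ j η) (r₁ j x.fst)
          = s * (co * inner ℂ (r₂ j η) (r₁ j x.fst)) := by ring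
        _ = s * (s * inner ℂ (r₂ j η) (r₂ j x.snd)) := by rw [e1]
        _ = s ^ 2 * inner ℂ (r₂ j η) (r₂ j x.snd) := by ring
    rw [key]
    ring
  rw [hadj]
  have hcomp : betaTheta C₁ C₂ B r₁ r₂ θ j ∘ₗ g = LinearMap.id - s ^ 2 • Q := by
    apply LinearMap.ext
    intro η
    simp only [LinearMap.comp_apply, hg, LinearMap.codRestrict_apply]
    simp only [betaTheta, LinearMap.comp_apply, Submodule.coe_subtype,
      LinearEquiv.coe_toLinearMap, WithLp.linearEquiv_apply, LinearMap.snd_apply,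
      hgfun, WithLp.linearEquiv_symm_apply, LinearMap.prod_apply, Function.prod,
      LinearMap.sub_apply, LinearMap.smul_apply, LinearMap.id_apply, eq2,
      AddEquiv.toFun_eq_coe, AddEquiv.invFun_eq_symm, WithLp.coe_addEquiv, WithLp.coe_symm_addEquiv, WithLp.ofLp_toLp, WithLp.coe_linearEquiv, WithLp.coe_symm_linearEquiv, WithLp.toLp_snd, WithLp.ofLp_snd, hQdef, LinearMap.codRestrict_apply]
  have hQidem : Q ∘ₗ Q = Q := by
    apply LinearMap.ext
    intro x
    simp [hQdef, LinearMap.comp_apply, h2]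
  have hR₂inj : Function.Injective ⇑R₂ := Function.LeftInverse.injective h2
  have hrange : LinearMap.range Q = LinearMap.range R₂ := by
    rw [hQdef, LinearMap.range_comp, LinearMap.range_eq_top.mpr (hr₂ j), Submodule.map_top]
  have hrank : Module.finrank ℂ ↥(LinearMap.range Q) = Module.finrank ℂ (B j) := by
    rw [hrange]; exact LinearMap.finrank_range_of_inj hR₂inj
  have hcos : Real.cos θ ≠ 0 := by
    have : 0 < Real.cos θ := Real.cos_pos_of_mem_Ioo ⟨by linarith [Real.pi_pos], hθ2⟩
    exact this.ne'
  rw [hcomp, det_one_sub_smul_idem Q hQidem, hrank]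
  have h5 : (1 : ℂ) - s ^ 2 = co ^ 2 := trig.symm
  rw [h5, zpow_neg, ← inv_zpow, zpow_natCast]
  congr 1
  rw [← Complex.ofReal_inv, Real.inv_one_add_tan_sq hcos, hco]
  push_cast
  ring

end
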